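/- arXiv:2505.14908 — 4 statements merged into one kernel-verified Lean document; each statement's English description precedes it below -/
import Mathlib

section
/- Let T be a tree with bipartition {A,B}, |A| = l+1 ≤ |B|, total order m, and let δ be the minimum degree in T over vertices of A. Let H = H₁ ∨ H₂ be the join of a graph H₁ on l vertices with a graph H₂ on n−l vertices, where n ≥ m. If H₂ has maximum degree at least δ, then H contains a subgraph isomorphic to T. -/
open scoped Classical

/-- `G` contains a copy of `T` (a subgraph isomorphic to `T`). -/
def ContainsCopy {V W : Type*} (T : SimpleGraph V) (G : SimpleGraph W) : Prop :=
  ∃ f : V → W, Function.Injective f ∧ ∀ ⦃a b⦄, T.Adj a b → G.Adj (f a) (f b)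

/-- The join `G ∨ H` of two graphs: their disjoint union together with all edges
between the two vertex sets. -/
def graphJoin {α β : Type*} (G : SimpleGraph α) (H : SimpleGraph β) : SimpleGraph (α ⊕ β) where
  Adj x y :=
    match x, y with
    | Sum.inl a, Sum.inl b => G.Adj a b
    | Sum.inr a, Sum.inr b => H.Adj a b
    | Sum.inl _, Sum.inr _ => True
    | Sum.inr _, Sum.inl _ => True
  symm := ⟨by
    rintro (a|a) (b|b) h
    · exact G.adj_symm h
    · trivial
    · trivial
    · exact H.adj_symm h⟩
  loopless := ⟨by
    rintro (a|a) h
    · exact G.irrefl h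
    · exact H.irrefl h⟩

set_option maxHeartbeats 1000000 in
/-- Let `T` be a tree with bipartition `{A, B}`, `|A| = l+1 ≤ |B|`, total order `m`,
and let `δ` be the minimum degree in `T` over vertices of `A`.  Let `H = H₁ ∨ H₂` be
the join of a graph `H₁` on `l` vertices with a graph `H₂` on `n − l` vertices, where
`n ≥ m`.  If `H₂` has maximum degree at least `δ`, then `H` contains a copy of `T`. -/
theorem tree_embeds_in_join_of_maxDegree_ge {V α β : Type*} [Fintype V] [Fintype α] [Fintype β]
    (T : SimpleGraph V) (hT : T.IsTree) (m l n δ : ℕ) (hmV : Fintype.card V = m)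
    (A : Finset V) (hbip : ∀ ⦃u v⦄, T.Adj u v → (u ∈ A ↔ v ∉ A))
    (hA : A.card = l + 1) (hAB : A.card ≤ Aᶜ.card)
    (hδmin : ∀ v ∈ A, δ ≤ T.degree v) (hδmem : ∃ v ∈ A, T.degree v = δ)
    (H₁ : SimpleGraph α) (H₂ : SimpleGraph β)
    (hα : Fintype.card α = l) (hβ : Fintype.card β = n - l) (hln : l ≤ n) (hnm : m ≤ n)
    (hmax : ∃ v : β, δ ≤ H₂.degree v) :
    ContainsCopy T (graphJoin H₁ H₂) := by
  classical
  obtain ⟨v₀, hv₀A, hv₀deg⟩ := hδmem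
  obtain ⟨w, hw⟩ := hmax
  set N : Finset V := T.neighborFinset v₀ with hNdef
  have hNcard : N.card = δ := by
    rw [hNdef, T.card_neighborFinset_eq_degree, hv₀deg]
  have hNsub : N ⊆ Aᶜ := by
    intro x hx
    rw [Finset.mem_compl]
    exact (hbip (by rwa [hNdef, SimpleGraph.mem_neighborFinset] at hx)).mp hv₀A
  have hMcard : δ ≤ (H₂.neighborFinset w).card := by
    rwa [H₂.card_neighborFinset_eq_degree]
  obtain ⟨M', hM'sub, hM'card⟩ := Finset.exists_subset_card_eq (s := H₂.neighborFinset w) hMcard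
  have hwM' : w ∉ M' := fun h => H₂.irrefl (v := w)
    ((SimpleGraph.mem_neighborFinset _ _ _).mp (hM'sub h))
  have hM'adj : ∀ x ∈ M', H₂.Adj w x := fun x hx =>
    (SimpleGraph.mem_neighborFinset _ _ _).mp (hM'sub hx)
  have hcardV : A.card + Aᶜ.card = m := by rw [Finset.card_add_card_compl, hmV]
  have hδβ : δ < n - l := by
    have := H₂.degree_lt_card_verts w
    omega
  set S : Finset β := Finset.univ \ insert w M' with hSdef
  set R : Finset V := Aᶜ \ N with hRdef
  have hRcard : R.card = Aᶜ.card - δ := by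
    rw [hRdef, Finset.card_sdiff_of_subset hNsub, hNcard]
  have hScard : S.card = (n - l) - (δ + 1) := by
    rw [hSdef, Finset.card_sdiff_of_subset (Finset.subset_univ _), Finset.card_insert_of_notMem hwM',
      hM'card, Finset.card_univ, hβ]
  have hRS : R.card ≤ S.card := by
    have hδc : δ ≤ Aᶜ.card := by
      have := Finset.card_le_card hNsub
      omega
    omega
  obtain ⟨S', hS'sub, hS'card⟩ := Finset.exists_subset_card_eq (s := S) hRS
  have hwS' : w ∉ S' := fun h => by
    have h2 := hS'sub h
    rw [hSdef, Finset.mem_sdiff] at h2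
    exact h2.2 (Finset.mem_insert_self w _)
  have hM'S' : ∀ x ∈ M', x ∉ S' := fun x hx h => by
    have h2 := hS'sub h
    rw [hSdef, Finset.mem_sdiff] at h2
    exact h2.2 (Finset.mem_insert_of_mem hx)
  have hA'card : Fintype.card ↥(A.erase v₀) = Fintype.card α := by
    rw [Fintype.card_coe, Finset.card_erase_of_mem hv₀A, hA, hα]
    omega
  have hNM' : Fintype.card ↥N = Fintype.card ↥M' := by
    rw [Fintype.card_coe, Fintype.card_coe, hNcard, hM'card]
  have hRS' : Fintype.card ↥R = Fintype.card ↥S' := by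
    rw [Fintype.card_coe, Fintype.card_coe, hS'card]
  set eA : ↥(A.erase v₀) ≃ α := Fintype.equivOfCardEq hA'card with heA
  set eN : ↥N ≃ ↥M' := Fintype.equivOfCardEq hNM' with heN
  set eR : ↥R ≃ ↥S' := Fintype.equivOfCardEq hRS' with heR
  set f : V → α ⊕ β := fun v =>
    if hv : v = v₀ then Sum.inr w
    else if h1 : v ∈ A then Sum.inl (eA ⟨v, Finset.mem_erase.mpr ⟨hv, h1⟩⟩)
    else if h2 : v ∈ N then Sum.inr ((eN ⟨v, h2⟩ : ↥M') : β)
    else Sum.inr ((eR ⟨v, Finset.mem_sdiff.mpr ⟨Finset.mem_compl.mpr h1, h2⟩⟩ : ↥S') : β)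
    with hf
  refine ⟨f, ?_, ?_⟩
  · intro a b hab
    simp only [hf] at hab
    split_ifs at hab
    all_goals simp only [Sum.inr.injEq, Sum.inl.injEq] at hab
    any_goals (subst_vars; rfl)
    · exact (hwM' (by rw [hab]; exact Finset.coe_mem _)).elim
    · exact (hwS' (by rw [hab]; exact Finset.coe_mem _)).elim
    · exact congrArg Subtype.val (eA.injective hab)
    · exact (hwM' (by rw [← hab]; exact Finset.coe_mem _)).elim
    · exact congrArg Subtype.val (eN.injective (Subtype.coe_injective hab))
    · exact (hM'S' _ (Finset.coe_mem _) (by rw [hab]; exact Finset.coe_mem _)).elim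
    · exact (hwS' (by rw [← hab]; exact Finset.coe_mem _)).elim
    · exact (hM'S' _ (Finset.coe_mem _) (by rw [← hab]; exact Finset.coe_mem _)).elim
    · exact congrArg Subtype.val (eR.injective (Subtype.coe_injective hab))
  · intro a b hadj
    by_cases haA : a ∈ A
    · have hbA : b ∉ A := (hbip hadj).mp haA
      have hbv : b ≠ v₀ := fun h => hbA (h ▸ hv₀A)
      by_cases ha0 : a = v₀
      · subst ha0
        have hbN : b ∈ N := by rw [hNdef, SimpleGraph.mem_neighborFinset]; exact hadj
        simp only [hf, dif_pos rfl, dif_neg hbv, dif_neg hbA, dif_pos hbN]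
        exact hM'adj _ (Finset.coe_mem _)
      · have hfa : ∃ x, f a = Sum.inl x := by
          simp only [hf, dif_neg ha0, dif_pos haA]
          exact ⟨_, rfl⟩
        have hfb : ∃ y, f b = Sum.inr y := by
          simp only [hf, dif_neg hbv, dif_neg hbA]
          split_ifs <;> exact ⟨_, rfl⟩
        obtain ⟨x, hx⟩ := hfa
        obtain ⟨y, hy⟩ := hfb
        rw [hx, hy]
        trivial
    · have hbAmem : b ∈ A := by
        by_contra h
        exact haA ((hbip hadj).mpr h)
      have hav : a ≠ v₀ := fun h => haA (h ▸ hv₀A)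
      by_cases hb0 : b = v₀
      · subst hb0
        have haN : a ∈ N := by
          rw [hNdef, SimpleGraph.mem_neighborFinset]
          exact hadj.symm
        simp only [hf, dif_pos rfl, dif_neg hav, dif_neg haA, dif_pos haN]
        exact (hM'adj _ (Finset.coe_mem _)).symm
      · have hfb : ∃ x, f b = Sum.inl x := by
          simp only [hf, dif_neg hb0, dif_pos hbAmem]
          exact ⟨_, rfl⟩
        have hfa : ∃ y, f a = Sum.inr y := by
          simp only [hf, dif_neg hav, dif_neg haA]
          split_ifs <;> exact ⟨_, rfl⟩
        obtain ⟨x, hx⟩ := hfb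
        obtain ⟨y, hy⟩ := hfa
        rw [hx, hy]
        trivial
end

section
/- Let d ≥ 1 and k ≥ 1. If H is a graph on N vertices with maximum degree at most d that contains no k vertex-disjoint copies of the star K_{1,d}, then H has at most (k−1)(d² + 1) vertices of degree exactly d. -/
open scoped Classical

/-- The set of vertices within distance 2 of `v` (tailored for the star argument). -/
noncomputable def ball2 {V : Type*} [Fintype V] (H : SimpleGraph V) (v : V) : Finset V :=
  insert v ((H.neighborFinset v).biUnion (fun u => insert u (H.neighborFinset u \ {v})))

lemma ball2_card {V : Type*} [Fintype V] (H : SimpleGraph V) (d : ℕ)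
    (hmax : ∀ v, H.degree v ≤ d) (v : V) : (ball2 H v).card ≤ d ^ 2 + 1 := by
  classical
  have h1 : (ball2 H v).card ≤
      ((H.neighborFinset v).biUnion (fun u => insert u (H.neighborFinset u \ {v}))).card + 1 :=
    Finset.card_insert_le _ _
  have h2 : ((H.neighborFinset v).biUnion (fun u => insert u (H.neighborFinset u \ {v}))).card ≤
      ∑ u ∈ H.neighborFinset v, (insert u (H.neighborFinset u \ {v})).card :=
    Finset.card_biUnion_le
  have h3 : ∀ u ∈ H.neighborFinset v, (insert u (H.neighborFinset u \ {v})).card ≤ d := by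
    intro u hu
    have hv : v ∈ H.neighborFinset u := by
      rw [SimpleGraph.mem_neighborFinset] at hu ⊢; exact hu.symm
    have hc : (H.neighborFinset u \ {v}).card = H.degree u - 1 := by
      rw [Finset.sdiff_singleton_eq_erase, Finset.card_erase_of_mem hv,
        SimpleGraph.card_neighborFinset_eq_degree]
    have hdu : 1 ≤ H.degree u := by
      have : 0 < (H.neighborFinset u).card := Finset.card_pos.2 ⟨v, hv⟩
      rwa [SimpleGraph.card_neighborFinset_eq_degree] at this
    have := Finset.card_insert_le u (H.neighborFinset u \ {v})
    have hdu2 := hmax u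
    omega
  have h4 : ∑ u ∈ H.neighborFinset v, (insert u (H.neighborFinset u \ {v})).card ≤
      (H.neighborFinset v).card * d := by
    calc ∑ u ∈ H.neighborFinset v, (insert u (H.neighborFinset u \ {v})).card
        ≤ ∑ _u ∈ H.neighborFinset v, d := Finset.sum_le_sum h3
      _ = (H.neighborFinset v).card * d := by rw [Finset.sum_const, smul_eq_mul]
  have h5 : (H.neighborFinset v).card ≤ d := by
    rw [SimpleGraph.card_neighborFinset_eq_degree]; exact hmax v
  have : (H.neighborFinset v).card * d ≤ d * d := Nat.mul_le_mul_right d h5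
  have hdd : d * d = d ^ 2 := (sq d).symm
  omega

lemma ball2_disjoint {V : Type*} [Fintype V] (H : SimpleGraph V) {v c : V}
    (hc : c ∉ ball2 H v) :
    Disjoint (insert c (H.neighborFinset c)) (insert v (H.neighborFinset v)) := by
  classical
  rw [Finset.disjoint_left]
  intro x hx hx'
  have hcv : c ≠ v := by
    rintro rfl; exact hc (Finset.mem_insert_self _ _)
  rcases Finset.mem_insert.1 hx with rfl | hxc
  · rcases Finset.mem_insert.1 hx' with rfl | hxv
    · exact hcv rfl
    · exact hc (Finset.mem_insert_of_mem (Finset.mem_biUnion.2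
        ⟨x, hxv, Finset.mem_insert_self _ _⟩))
  · rcases Finset.mem_insert.1 hx' with rfl | hxv
    · -- x = v ∈ N(c), so c ∈ N(v)
      have : c ∈ H.neighborFinset x := by
        rw [SimpleGraph.mem_neighborFinset] at hxc ⊢; exact hxc.symm
      exact hc (Finset.mem_insert_of_mem (Finset.mem_biUnion.2
        ⟨c, this, Finset.mem_insert_self _ _⟩))
    · have hcx : c ∈ H.neighborFinset x := by
        rw [SimpleGraph.mem_neighborFinset] at hxc ⊢; exact hxc.symm
      exact hc (Finset.mem_insert_of_mem (Finset.mem_biUnion.2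
        ⟨x, hxv, Finset.mem_insert_of_mem (Finset.mem_sdiff.2
          ⟨hcx, by simp [hcv]⟩)⟩))

lemma star_greedy {V : Type*} [Fintype V] (H : SimpleGraph V) (d : ℕ)
    (hmax : ∀ v, H.degree v ≤ d) :
    ∀ (m : ℕ) (A : Finset V), m * (d ^ 2 + 1) < A.card →
      ∃ c : Fin (m + 1) → V, (∀ i, c i ∈ A) ∧
        ∀ i j, i ≠ j → Disjoint (insert (c i) (H.neighborFinset (c i)))
          (insert (c j) (H.neighborFinset (c j))) := by
  classical
  intro m
  induction m with
  | zero =>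
    intro A hA
    obtain ⟨v, hv⟩ := Finset.card_pos.1 (lt_of_le_of_lt (Nat.zero_le _) hA)
    refine ⟨fun _ => v, fun _ => hv, fun i j hij => absurd ?_ hij⟩
    fin_cases i <;> fin_cases j <;> rfl
  | succ m ih =>
    intro A hA
    obtain ⟨v, hv⟩ := Finset.card_pos.1 (lt_of_le_of_lt (Nat.zero_le _) hA)
    have hcard : m * (d ^ 2 + 1) < (A \ ball2 H v).card := by
      have h1 : A.card ≤ (A \ ball2 H v).card + (ball2 H v).card :=
        Finset.card_le_card_sdiff_add_card
      have h2 := ball2_card H d hmax v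
      have h3 : (m + 1) * (d ^ 2 + 1) = m * (d ^ 2 + 1) + (d ^ 2 + 1) := by ring
      omega
    obtain ⟨c', hc'A, hc'disj⟩ := ih (A \ ball2 H v) hcard
    have hc'ball : ∀ i, c' i ∉ ball2 H v := fun i => (Finset.mem_sdiff.1 (hc'A i)).2
    refine ⟨Fin.cons v c', ?_, ?_⟩
    · intro i
      induction i using Fin.cases with
      | zero => simpa using hv
      | succ j => simpa using (Finset.mem_sdiff.1 (hc'A j)).1
    · intro i j hij
      induction i using Fin.cases with
      | zero =>
        induction j using Fin.cases with
        | zero => exact absurd rfl hij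
        | succ j' => exact (ball2_disjoint H (hc'ball j')).symm
      | succ i' =>
        induction j using Fin.cases with
        | zero => exact ball2_disjoint H (hc'ball i')
        | succ j' =>
          have hij' : i' ≠ j' := fun h => hij (congrArg Fin.succ h)
          exact hc'disj i' j' hij'

/-- If `H` is a graph on `N` vertices with maximum degree at most `d ≥ 1` that does not
contain `k ≥ 1` pairwise vertex-disjoint copies of the star `K_{1,d}` (a copy being
given by a center together with `d` of its neighbors), then `H` has at most
`(k−1)(d² + 1)` vertices of degree exactly `d`. -/
theorem star_free_degree_count {V : Type*} [Fintype V] (H : SimpleGraph V)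
    (N d k : ℕ) (hd : 1 ≤ d) (hk : 1 ≤ k) (hN : Fintype.card V = N)
    (hmax : ∀ v, H.degree v ≤ d)
    (hfree : ¬ ∃ (c : Fin k → V) (S : Fin k → Finset V),
        (∀ i, S i ⊆ H.neighborFinset (c i) ∧ (S i).card = d) ∧
        (∀ i j, i ≠ j → Disjoint (insert (c i) (S i)) (insert (c j) (S j)))) :
    (Finset.univ.filter (fun v => H.degree v = d)).card ≤ (k - 1) * (d ^ 2 + 1) := by
  classical
  by_contra h
  push_neg at h
  obtain ⟨m, rfl⟩ := Nat.exists_eq_succ_of_ne_zero (by omega : k ≠ 0)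
  have hm : m * (d ^ 2 + 1) < (Finset.univ.filter (fun v => H.degree v = d)).card := by
    simpa using h
  obtain ⟨c, hcA, hcdisj⟩ := star_greedy H d hmax m _ hm
  refine hfree ⟨c, fun i => H.neighborFinset (c i), fun i => ⟨subset_rfl, ?_⟩, hcdisj⟩
  rw [SimpleGraph.card_neighborFinset_eq_degree]
  exact (Finset.mem_filter.1 (hcA i)).2
end

section
/- For integers l ≥ 1 and δ ≥ 1, there exists a tree T on m vertices whose smaller partite set A has exactly l+1 vertices and with min{deg_T(v) : v ∈ A} = δ if and only if m ≥ max{2l+2, (l+1)δ + 1}. -/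
open scoped Classical

lemma walk_support_getElem {V : Type*} {G : SimpleGraph V} {u v : V} (p : G.Walk u v) :
    ∀ (i : ℕ) (h : i < p.support.length), p.support[i] = p.getVert i := by
  induction p with
  | nil =>
    intro i h
    simp only [SimpleGraph.Walk.support_nil, List.length_singleton] at h
    have : i = 0 := by omega
    subst this; simp
  | cons hadj q ih =>
    intro i h
    cases i with
    | zero => simp
    | succ n =>
      simp only [SimpleGraph.Walk.support_cons, List.getElem_cons_succ,
        SimpleGraph.Walk.getVert_cons_succ]
      exact ih n (by simpa [SimpleGraph.Walk.support_cons] using h)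

lemma acyclic_of_parent {V : Type*} [LinearOrder V] {G : SimpleGraph V} (p : V → V)
    (H : ∀ ⦃u v⦄, G.Adj u v → (p u = v ∧ v < u) ∨ (p v = u ∧ u < v)) : G.IsAcyclic := by
  intro v0 c hc
  have hne : v0 ∈ c.support := c.start_mem_support
  have hnonempty : (c.support.toFinset).Nonempty := ⟨v0, List.mem_toFinset.2 hne⟩
  set w := c.support.toFinset.max' hnonempty with hw
  have hwmem : w ∈ c.support := List.mem_toFinset.1 (Finset.max'_mem _ _)
  have hmax : ∀ z ∈ c.support, z ≤ w := fun z hz =>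
    Finset.le_max' _ _ (List.mem_toFinset.2 hz)
  set c' := c.rotate w hwmem with hc'def
  have hc' : c'.IsCycle := hc.rotate hwmem
  have hlen : 3 ≤ c'.length := hc'.three_le_length
  set n := c'.length with hn
  have hsl : c'.support.length = n + 1 := by
    rw [SimpleGraph.Walk.length_support]
  have htl : c'.support.tail.Nodup := hc'.support_nodup
  have htll : c'.support.tail.length = n := by
    rw [List.length_tail, hsl]; omega
  -- membership in c'.support implies ≤ w
  have hmax' : ∀ z ∈ c'.support.tail, z ≤ w := by
    intro z hz
    have : z ∈ c.support.tail := by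
      have hrot := SimpleGraph.Walk.support_rotate c w hwmem
      exact hrot.mem_iff.1 hz
    exact hmax z (List.mem_of_mem_tail this)
  -- the two neighbors of w
  have h1lt : 1 < c'.support.length := by omega
  have h0t : 0 < c'.support.tail.length := by omega
  have hn2t : n - 2 < c'.support.tail.length := by omega
  set x := c'.support.tail[0]'h0t with hx
  set y := c'.support.tail[n-2]'hn2t with hy
  have hxv : x = c'.getVert 1 := by
    rw [hx, List.getElem_tail, walk_support_getElem]
  have hyv : y = c'.getVert (n-1) := by
    rw [hy, List.getElem_tail, walk_support_getElem]
    congr 1; omega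
  have hadj1 : G.Adj w x := by
    have := c'.adj_getVert_succ (i := 0) (by omega)
    rw [SimpleGraph.Walk.getVert_zero] at this
    rw [hxv]; exact this
  have hadj2 : G.Adj y w := by
    have := c'.adj_getVert_succ (i := n - 1) (by omega)
    have heq : n - 1 + 1 = n := by omega
    rw [heq] at this
    have h2 : c'.getVert n = w := by rw [hn]; exact c'.getVert_length
    rw [h2] at this
    rw [hyv]; exact this
  have hxle : x ≤ w := hmax' _ (List.getElem_mem _)
  have hyle : y ≤ w := hmax' _ (List.getElem_mem _)
  have hpx : p w = x := by
    rcases H hadj1 with ⟨h, _⟩ | ⟨_, h⟩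
    · exact h
    · exact absurd h (not_lt.2 hxle)
  have hpy : p w = y := by
    rcases H hadj2 with ⟨_, h⟩ | ⟨h, _⟩
    · exact absurd h (not_lt.2 hyle)
    · exact h
  have hxy : x = y := by rw [← hpx, hpy]
  have : (0 : ℕ) = n - 2 := by
    have := (List.Nodup.getElem_inj_iff htl).1 (hx ▸ hy ▸ hxy)
    exact this
  omega

/-- For integers `l ≥ 1` and `δ ≥ 1`, there exists a tree `T` on `m` vertices whose
smaller partite set `A` has exactly `l+1` vertices and whose minimum degree over `A`
equals `δ`, if and only if `m ≥ max {2l+2, (l+1)δ + 1}`. -/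
theorem tree_family_nonempty_iff (l δ m : ℕ) (hl : 1 ≤ l) (hδ : 1 ≤ δ) :
    (∃ (T : SimpleGraph (Fin m)) (A : Finset (Fin m)),
        T.IsTree ∧
        (∀ ⦃u v⦄, T.Adj u v → (u ∈ A ↔ v ∉ A)) ∧
        A.card = l + 1 ∧ A.card ≤ Aᶜ.card ∧
        (∀ v ∈ A, δ ≤ T.degree v) ∧ (∃ v ∈ A, T.degree v = δ)) ↔
      max (2 * l + 2) ((l + 1) * δ + 1) ≤ m := by
  constructor
  · rintro ⟨T, A, htree, hbip, hcardA, hle, hdeg, -⟩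
    have hsum : A.card + Aᶜ.card = m := by
      rw [Finset.card_add_card_compl, Fintype.card_fin]
    have hedge : T.edgeFinset.card + 1 = m := by
      have := htree.card_edgeFinset
      rwa [Fintype.card_fin] at this
    have hdisj : ∀ u ∈ A, ∀ v ∈ A, u ≠ v →
        Disjoint (T.incidenceFinset u) (T.incidenceFinset v) := by
      intro u hu v hv huv
      rw [Finset.disjoint_left]
      intro e heu hev
      rw [SimpleGraph.mem_incidenceFinset] at heu hev
      have he : e = s(u, v) := T.incidenceSet_inter_incidenceSet_subset huv ⟨heu, hev⟩
      have hadj : T.Adj u v := by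
        have := heu.1
        rw [he, SimpleGraph.mem_edgeSet] at this
        exact this
      exact (hbip hadj).1 hu hv
    have hsub : A.biUnion (fun v => T.incidenceFinset v) ⊆ T.edgeFinset := by
      intro e he
      obtain ⟨v, hv, hev⟩ := Finset.mem_biUnion.1 he
      rw [SimpleGraph.mem_incidenceFinset] at hev
      exact SimpleGraph.mem_edgeFinset.2 hev.1
    have hcount : (l + 1) * δ ≤ T.edgeFinset.card := by
      calc (l + 1) * δ = ∑ _v ∈ A, δ := by
            rw [Finset.sum_const, hcardA, smul_eq_mul]
        _ ≤ ∑ v ∈ A, T.degree v := Finset.sum_le_sum hdeg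
        _ = ∑ v ∈ A, (T.incidenceFinset v).card :=
            Finset.sum_congr rfl fun v _ => (T.card_incidenceFinset_eq_degree v).symm
        _ = (A.biUnion fun v => T.incidenceFinset v).card := (Finset.card_biUnion hdisj).symm
        _ ≤ T.edgeFinset.card := Finset.card_le_card hsub
    exact max_le (by omega) (by omega)
  · intro hm
    have hm1 : 2 * l + 2 ≤ m := le_trans (le_max_left _ _) hm
    have hm2 : (l + 1) * δ + 1 ≤ m := le_trans (le_max_right _ _) hm
    obtain ⟨d, rfl⟩ : ∃ d, δ = d + 1 := ⟨δ - 1, by omega⟩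
    have hm2' : l * d + l + d + 2 ≤ m := by
      have : (l + 1) * (d + 1) = l * d + l + d + 1 := by ring
      omega
    have hm0 : 0 < m := by omega
    set P : ℕ → ℕ := fun k => if k ≤ l + 1 then 0 else 1 + min ((k - (l + 2)) / d) l with hP
    have hPlo : ∀ k, k ≤ l + 1 → P k = 0 := by intro k hk; simp [hP, hk]
    have hPhi : ∀ k, l + 2 ≤ k → P k = 1 + min ((k - (l + 2)) / d) l := by
      intro k hk; simp only [hP]; rw [if_neg (by omega)]
    have hPub : ∀ k, P k ≤ l + 1 := by
      intro k
      by_cases hk : k ≤ l + 1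
      · rw [hPlo k hk]; omega
      · rw [hPhi k (by omega)]
        have := min_le_right ((k - (l + 2)) / d) l
        omega
    have hPlt : ∀ k, 1 ≤ k → P k < k := by
      intro k hk
      by_cases h : k ≤ l + 1
      · rw [hPlo k h]; omega
      · have := hPub k; omega
    have hPself : ∀ k, P k ≤ k := by
      intro k
      rcases Nat.eq_zero_or_pos k with h | h
      · subst h; rw [hPlo 0 (by omega)]
      · exact le_of_lt (hPlt k h)
    set PF : Fin m → Fin m := fun v => ⟨P v, lt_of_le_of_lt (hPself v) v.isLt⟩ with hPF
    have hPFval : ∀ v : Fin m, (PF v : ℕ) = P v := fun v => rfl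
    set G : SimpleGraph (Fin m) := SimpleGraph.fromRel (fun u v => (v : ℕ) = P u) with hG
    have hadj : ∀ u v : Fin m, G.Adj u v ↔ u ≠ v ∧ ((v : ℕ) = P u ∨ (u : ℕ) = P v) := by
      intro u v; rw [hG, SimpleGraph.fromRel_adj]
    -- parent hypothesis
    have hparent : ∀ ⦃u v : Fin m⦄, G.Adj u v → (PF u = v ∧ v < u) ∨ (PF v = u ∧ u < v) := by
      intro u v huv
      rw [hadj] at huv
      obtain ⟨hne, h | h⟩ := huv
      · have hu1 : 1 ≤ (u : ℕ) := by
          by_contra hc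
          have hu0 : (u : ℕ) = 0 := by omega
          apply hne; apply Fin.ext
          rw [h, hu0, hPlo 0 (by omega)]
        have hlt : P u < u := hPlt u hu1
        left
        exact ⟨Fin.ext (h.symm), Fin.lt_def.2 (by omega)⟩
      · have hv1 : 1 ≤ (v : ℕ) := by
          by_contra hc
          have hv0 : (v : ℕ) = 0 := by omega
          apply hne; apply Fin.ext
          rw [h, hv0, hPlo 0 (by omega)]
        have hlt : P v < v := hPlt v hv1
        right
        exact ⟨Fin.ext (h.symm), Fin.lt_def.2 (by omega)⟩
    have hacyc : G.IsAcyclic := acyclic_of_parent PF hparent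
    -- connectivity
    have hreach : ∀ n (v : Fin m), (v : ℕ) = n → G.Reachable v ⟨0, hm0⟩ := by
      intro n
      induction n using Nat.strong_induction_on with
      | _ n ih =>
        intro v hv
        rcases Nat.eq_zero_or_pos n with h0 | h0
        · have : v = ⟨0, hm0⟩ := Fin.ext (by show (v : ℕ) = 0; omega)
          rw [this]
        · have hv1 : 1 ≤ (v : ℕ) := by omega
          have hlt : P v < v := hPlt v hv1
          have ha : G.Adj v (PF v) := by
            rw [hadj]
            refine ⟨?_, Or.inl (hPFval v)⟩
            intro hc
            have h1 : (v : ℕ) = P v := congrArg Fin.val hc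
            omega
          exact ha.reachable.trans (ih (P v) (by omega) (PF v) (hPFval v))
    have hconn : G.Connected := by
      haveI : Nonempty (Fin m) := ⟨⟨0, hm0⟩⟩
      exact SimpleGraph.Connected.mk
        (fun u v => (hreach _ u rfl).trans (hreach _ v rfl).symm)
    have htree : G.IsTree := ⟨hconn, hacyc⟩
    -- the set A
    have hlt_m : ∀ k ∈ Finset.Icc 1 (l + 1), k < m := fun k hk => by
      have := (Finset.mem_Icc.1 hk).2; omega
    set A : Finset (Fin m) := (Finset.Icc 1 (l + 1)).attachFin hlt_m with hA
    have hmemA : ∀ v : Fin m, v ∈ A ↔ 1 ≤ (v : ℕ) ∧ (v : ℕ) ≤ l + 1 := by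
      intro v; rw [hA, Finset.mem_attachFin, Finset.mem_Icc]
    have hcardA : A.card = l + 1 := by
      rw [hA, Finset.card_attachFin, Nat.card_Icc]
      omega
    -- bipartite
    have hclaim : ∀ u v : Fin m, u ≠ v → (v : ℕ) = P u → (u ∈ A ↔ v ∉ A) := by
      intro u v hne h
      rw [hmemA u, hmemA v]
      by_cases hk : (u : ℕ) ≤ l + 1
      · have hv0 : (v : ℕ) = 0 := by rw [h, hPlo u hk]
        have hu1 : 1 ≤ (u : ℕ) := by
          by_contra hc
          exact hne (Fin.ext (by show (u : ℕ) = (v : ℕ); omega))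
        constructor
        · intro _ hvmem
          omega
        · intro _
          exact ⟨hu1, hk⟩
      · have hv : (v : ℕ) = 1 + min (((u : ℕ) - (l + 2)) / d) l := by
          rw [h, hPhi u (by omega)]
        have h1 : 1 ≤ (v : ℕ) := hv ▸ Nat.le_add_right 1 _
        have h2 : (v : ℕ) ≤ l + 1 := by
          have := min_le_right (((u : ℕ) - (l + 2)) / d) l; omega
        constructor
        · intro humem
          exact absurd humem.2 hk
        · intro hnv
          exact absurd (hnv ⟨h1, h2⟩) (fun h => h)
    have hbip : ∀ ⦃u v : Fin m⦄, G.Adj u v → (u ∈ A ↔ v ∉ A) := by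
      intro u v huv
      rw [hadj] at huv
      obtain ⟨hne, h | h⟩ := huv
      · exact hclaim u v hne h
      · have := hclaim v u hne.symm h
        tauto
    -- neighbor membership
    have hnb : ∀ v u : Fin m, u ∈ G.neighborFinset v ↔
        v ≠ u ∧ ((u : ℕ) = P v ∨ (v : ℕ) = P u) := by
      intro v u; rw [SimpleGraph.mem_neighborFinset, hadj]
    set z : Fin m := ⟨0, hm0⟩ with hz
    have hz0 : (z : ℕ) = 0 := rfl
    have hzmem : ∀ v : Fin m, 1 ≤ (v : ℕ) → (v : ℕ) ≤ l + 1 → z ∈ G.neighborFinset v := by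
      intro v h1 h2
      rw [hnb]
      refine ⟨?_, Or.inl ?_⟩
      · intro hc
        have h0 : (v : ℕ) = (z : ℕ) := congrArg Fin.val hc
        omega
      · rw [hz0, hPlo v h2]
    -- degree lower bounds
    have hdeglow : ∀ v ∈ A, d + 1 ≤ G.degree v := by
      intro v hvA
      rw [hmemA] at hvA
      obtain ⟨hv1, hv2⟩ := hvA
      rw [← SimpleGraph.card_neighborFinset_eq_degree]
      rcases Nat.eq_zero_or_pos d with hd0 | hd1
      · subst hd0
        have hsub : {z} ⊆ G.neighborFinset v := by
          simp only [Finset.singleton_subset_iff]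
          exact hzmem v hv1 hv2
        have := Finset.card_le_card hsub
        simpa using this
      · set t := (v : ℕ) - 1 with ht
        have hvt : (v : ℕ) = 1 + t := by omega
        have htl : t ≤ l := by omega
        by_cases htlt : t < l
        · -- interior vertex: exactly d children [l+2+t*d, l+2+(t+1)*d)
          have hexp : (t + 1) * d = t * d + d := by ring
          have hmul : (t + 1) * d ≤ l * d := Nat.mul_le_mul_right d (by omega)
          have hbd : ∀ k ∈ Finset.Ico (l + 2 + t * d) (l + 2 + (t + 1) * d), k < m := by
            intro k hk
            have h2 := (Finset.mem_Ico.1 hk).2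
            omega
          set S := insert z ((Finset.Ico (l + 2 + t * d) (l + 2 + (t + 1) * d)).attachFin hbd)
            with hS
          have hzns : z ∉ (Finset.Ico (l + 2 + t * d) (l + 2 + (t + 1) * d)).attachFin hbd := by
            rw [Finset.mem_attachFin, Finset.mem_Ico]
            omega
          have hcardS : S.card = d + 1 := by
            rw [hS, Finset.card_insert_of_notMem hzns, Finset.card_attachFin, Nat.card_Ico]
            omega
          have hsub : S ⊆ G.neighborFinset v := by
            intro u hu
            rw [hS, Finset.mem_insert] at hu
            rcases hu with rfl | hu
            · exact hzmem v hv1 hv2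
            · rw [Finset.mem_attachFin, Finset.mem_Ico] at hu
              obtain ⟨ha, hb⟩ := hu
              rw [hnb]
              constructor
              · intro hc
                have h0 : (v : ℕ) = (u : ℕ) := congrArg Fin.val hc
                omega
              · right
                rw [hPhi u (by omega)]
                have hdiv : ((u : ℕ) - (l + 2)) / d = t :=
                  Nat.div_eq_of_lt_le (by omega) (by omega)
                rw [hdiv, min_eq_left htl]
                omega
          calc d + 1 = S.card := hcardS.symm
            _ ≤ _ := Finset.card_le_card hsub
        · -- last vertex t = l
          have htleq : t = l := by omega
          have hbd : ∀ k ∈ Finset.Ico (l + 2 + l * d) m, k < m := fun k hk =>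
            (Finset.mem_Ico.1 hk).2
          set S := insert z ((Finset.Ico (l + 2 + l * d) m).attachFin hbd) with hS
          have hzns : z ∉ (Finset.Ico (l + 2 + l * d) m).attachFin hbd := by
            rw [Finset.mem_attachFin, Finset.mem_Ico]
            omega
          have hcardS : S.card = 1 + (m - (l + 2 + l * d)) := by
            rw [hS, Finset.card_insert_of_notMem hzns, Finset.card_attachFin, Nat.card_Ico]
            omega
          have hsub : S ⊆ G.neighborFinset v := by
            intro u hu
            rw [hS, Finset.mem_insert] at hu
            rcases hu with rfl | hu
            · exact hzmem v hv1 hv2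
            · rw [Finset.mem_attachFin, Finset.mem_Ico] at hu
              obtain ⟨ha, hb⟩ := hu
              rw [hnb]
              constructor
              · intro hc
                have h0 : (v : ℕ) = (u : ℕ) := congrArg Fin.val hc
                omega
              · right
                rw [hPhi u (by omega)]
                have hdiv : l ≤ ((u : ℕ) - (l + 2)) / d := by
                  rw [Nat.le_div_iff_mul_le hd1]
                  omega
                rw [min_eq_right hdiv]
                omega
          calc d + 1 ≤ S.card := by rw [hcardS]; omega
            _ ≤ _ := Finset.card_le_card hsub
    -- witness
    have hwit : ∃ v ∈ A, G.degree v = d + 1 := by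
      rcases Nat.eq_zero_or_pos d with hd0 | hd1
      · subst hd0
        set v2 : Fin m := ⟨2, by omega⟩ with hv2
        have hv2v : (v2 : ℕ) = 2 := rfl
        refine ⟨v2, ?_, ?_⟩
        · rw [hmemA, hv2v]; omega
        · rw [← SimpleGraph.card_neighborFinset_eq_degree]
          have hns : G.neighborFinset v2 = {z} := by
            ext u
            rw [hnb, Finset.mem_singleton]
            constructor
            · rintro ⟨hne, h | h⟩
              · apply Fin.ext
                rw [h, hv2v, hPlo 2 (by omega), hz0]
              · exfalso
                by_cases hk : (u : ℕ) ≤ l + 1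
                · rw [hPlo u hk, hv2v] at h; omega
                · rw [hPhi u (by omega), hv2v] at h
                  simp only [Nat.div_zero, Nat.zero_min] at h
                  omega
            · rintro rfl
              have := hzmem v2 (by omega) (by omega)
              rw [hnb] at this
              exact this
          rw [hns]; simp
      · set v1 : Fin m := ⟨1, by omega⟩ with hv1
        have hv1v : (v1 : ℕ) = 1 := rfl
        refine ⟨v1, ?_, ?_⟩
        · rw [hmemA, hv1v]; omega
        · rw [← SimpleGraph.card_neighborFinset_eq_degree]
          have hbd : ∀ k ∈ Finset.Ico (l + 2) (l + 2 + d), k < m := by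
            intro k hk
            have := (Finset.mem_Ico.1 hk).2; omega
          have hset : G.neighborFinset v1
              = insert z ((Finset.Ico (l + 2) (l + 2 + d)).attachFin hbd) := by
            ext u
            rw [hnb, Finset.mem_insert, Finset.mem_attachFin, Finset.mem_Ico]
            constructor
            · rintro ⟨hne, h | h⟩
              · left; apply Fin.ext; rw [h, hv1v, hPlo 1 (by omega), hz0]
              · right
                by_cases hk : (u : ℕ) ≤ l + 1
                · rw [hPlo u hk, hv1v] at h; omega
                · rw [hPhi u (by omega), hv1v] at h
                  have hmin : min (((u : ℕ) - (l + 2)) / d) l = 0 := by omega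
                  have hdiv : ((u : ℕ) - (l + 2)) / d = 0 := by
                    rcases Nat.min_eq_zero_iff.1 hmin with h' | h'
                    · exact h'
                    · omega
                  have := (Nat.div_eq_zero_iff_lt hd1).1 hdiv
                  omega
            · rintro (rfl | ⟨ha, hb⟩)
              · have := hzmem v1 (by omega) (by omega)
                rw [hnb] at this
                exact this
              · constructor
                · intro hc
                  have h0 : (v1 : ℕ) = (u : ℕ) := congrArg Fin.val hc
                  omega
                · right
                  rw [hPhi u (by omega), hv1v]
                  have hdiv : ((u : ℕ) - (l + 2)) / d = 0 := Nat.div_eq_of_lt (by omega)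
                  rw [hdiv]
                  simp
          rw [hset]
          have hzns : z ∉ (Finset.Ico (l + 2) (l + 2 + d)).attachFin hbd := by
            rw [Finset.mem_attachFin, Finset.mem_Ico]
            omega
          rw [Finset.card_insert_of_notMem hzns, Finset.card_attachFin, Nat.card_Ico]
          omega
    refine ⟨G, A, htree, hbip, hcardA, ?_, by convert hdeglow, by convert hwit⟩
    rw [Finset.card_compl, Fintype.card_fin, hcardA]
    omega
end

section
/- Let H = H₁ ∨ H₂ where H₁ has l vertices and H₂ has n−l vertices with maximum degree d, λ(H) > 0, and let y be a Perron eigenvector of H. Set M = max{y_v : v ∈ V(H₂)} and μ = min{y_v : v ∈ V(H₂)}. Then M − μ ≤ dM/λ(H), and hence μ ≥ M(1 − d/√(l(n−l))). -/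
open scoped Classical

/-- The adjacency spectral radius (largest adjacency eigenvalue) of a finite simple graph. -/
noncomputable def specRad {V : Type*} [Fintype V] (G : SimpleGraph V) : ℝ :=
  sSup {μ : ℝ | Module.End.HasEigenvalue (Matrix.toLin' (G.adjMatrix ℝ)) μ}

/-- Let `H = H₁ ∨ H₂` where `H₁` has `l ≥ 1` vertices and `H₂` has `n − l` vertices
(`n > l`) with maximum degree `d`, `λ(H) > 0`, and let `y` be a Perron eigenvector of
`H`.  Set `M = max{y_v : v ∈ V(H₂)}` and `μ = min{y_v : v ∈ V(H₂)}`.  Then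
`M − μ ≤ d M / λ(H)`, and hence `μ ≥ M (1 − d / √(l(n−l)))`. -/
theorem perron_entry_gap_join {α β : Type*} [Fintype α] [Fintype β] [Nonempty β]
    (H₁ : SimpleGraph α) (H₂ : SimpleGraph β) (l n d : ℕ)
    (hα : Fintype.card α = l) (hβ : Fintype.card β = n - l) (hl : 1 ≤ l) (hln : l < n)
    (hd : ∀ v, H₂.degree v ≤ d)
    (hlam : 0 < specRad (graphJoin H₁ H₂))
    (y : α ⊕ β → ℝ)
    (heig : ((graphJoin H₁ H₂).adjMatrix ℝ).mulVec y = specRad (graphJoin H₁ H₂) • y)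
    (hpos : ∀ v, 0 < y v) :
    Finset.univ.sup' Finset.univ_nonempty (fun v : β => y (Sum.inr v)) -
        Finset.univ.inf' Finset.univ_nonempty (fun v : β => y (Sum.inr v)) ≤
      (d : ℝ) * Finset.univ.sup' Finset.univ_nonempty (fun v : β => y (Sum.inr v)) /
        specRad (graphJoin H₁ H₂) ∧
    Finset.univ.sup' Finset.univ_nonempty (fun v : β => y (Sum.inr v)) *
        (1 - (d : ℝ) / Real.sqrt ((l : ℝ) * ((n : ℝ) - l))) ≤
      Finset.univ.inf' Finset.univ_nonempty (fun v : β => y (Sum.inr v)) := by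
  classical
  have hαne : Nonempty α := Fintype.card_pos_iff.mp (by omega)
  set lam := specRad (graphJoin H₁ H₂) with hlamdef
  -- pointwise eigen equation
  have heq : ∀ v, (∑ x, (if (graphJoin H₁ H₂).Adj v x then y x else 0)) = lam * y v := by
    intro v
    have h := congrFun heig v
    simpa [Matrix.mulVec, dotProduct, SimpleGraph.adjMatrix_apply, ite_mul] using h
  set S := ∑ a, y (Sum.inl a) with hSdef
  set T := ∑ b, y (Sum.inr b) with hTdef
  have heqβ : ∀ w : β, lam * y (Sum.inr w) =
      S + ∑ b, (if H₂.Adj w b then y (Sum.inr b) else 0) := by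
    intro w
    have h := heq (Sum.inr w)
    rw [Fintype.sum_sum_type] at h
    have h1 : (∑ a : α, (if (graphJoin H₁ H₂).Adj (Sum.inr w) (Sum.inl a) then y (Sum.inl a) else 0)) = S := by
      simp [graphJoin]
      rfl
    have h2 : (∑ b : β, (if (graphJoin H₁ H₂).Adj (Sum.inr w) (Sum.inr b) then y (Sum.inr b) else 0)) =
        ∑ b, (if H₂.Adj w b then y (Sum.inr b) else 0) := by
      apply Finset.sum_congr rfl
      intro b _
      congr 1
    rw [h1, h2] at h
    linarith [h]
  have heqα : ∀ a : α, lam * y (Sum.inl a) =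
      (∑ a', (if H₁.Adj a a' then y (Sum.inl a') else 0)) + T := by
    intro a
    have h := heq (Sum.inl a)
    rw [Fintype.sum_sum_type] at h
    have h1 : (∑ a' : α, (if (graphJoin H₁ H₂).Adj (Sum.inl a) (Sum.inl a') then y (Sum.inl a') else 0)) =
        ∑ a', (if H₁.Adj a a' then y (Sum.inl a') else 0) := by
      apply Finset.sum_congr rfl
      intro a' _
      congr 1
    have h2 : (∑ b : β, (if (graphJoin H₁ H₂).Adj (Sum.inl a) (Sum.inr b) then y (Sum.inr b) else 0)) = T := by
      simp [graphJoin]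
      rfl
    rw [h1, h2] at h
    linarith [h]
  have hS : 0 < S := Finset.sum_pos (fun a _ => hpos _) Finset.univ_nonempty
  have hT : 0 < T := Finset.sum_pos (fun b _ => hpos _) Finset.univ_nonempty
  -- lam * S ≥ l * T
  have hlS : (l : ℝ) * T ≤ lam * S := by
    have : lam * S = ∑ a, lam * y (Sum.inl a) := by rw [Finset.mul_sum]
    rw [this]
    calc (l : ℝ) * T = ∑ _a : α, T := by
          rw [Finset.sum_const, nsmul_eq_mul, Finset.card_univ, hα]
      _ ≤ ∑ a, lam * y (Sum.inl a) := by
          apply Finset.sum_le_sum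
          intro a _
          rw [heqα a]
          have : (0:ℝ) ≤ ∑ a', (if H₁.Adj a a' then y (Sum.inl a') else 0) :=
            Finset.sum_nonneg (fun a' _ => by split <;> [exact (hpos _).le; exact le_rfl])
          linarith
  have hlT : ((n : ℝ) - l) * S ≤ lam * T := by
    have hcast : ((Fintype.card β : ℝ)) = (n : ℝ) - l := by
      rw [hβ]; push_cast [Nat.cast_sub hln.le]; ring
    have : lam * T = ∑ b, lam * y (Sum.inr b) := by rw [Finset.mul_sum]
    rw [this]
    calc ((n : ℝ) - l) * S = ∑ _b : β, S := by
          rw [Finset.sum_const, nsmul_eq_mul, Finset.card_univ, hcast]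
      _ ≤ ∑ b, lam * y (Sum.inr b) := by
          apply Finset.sum_le_sum
          intro b _
          rw [heqβ b]
          have : (0:ℝ) ≤ ∑ b', (if H₂.Adj b b' then y (Sum.inr b') else 0) :=
            Finset.sum_nonneg (fun b' _ => by split <;> [exact (hpos _).le; exact le_rfl])
          linarith
  have hnl : (1:ℝ) ≤ (n : ℝ) - l := by
    have : (l:ℝ) + 1 ≤ n := by exact_mod_cast hln
    linarith
  have hl1 : (1:ℝ) ≤ (l : ℝ) := by exact_mod_cast hl
  have hlam2 : (l : ℝ) * ((n : ℝ) - l) ≤ lam ^ 2 := by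
    have hmul : ((l:ℝ) * T) * (((n:ℝ) - l) * S) ≤ (lam * S) * (lam * T) :=
      mul_le_mul hlS hlT (by positivity) (by positivity)
    have hST : 0 < S * T := by positivity
    nlinarith [hmul, hST]
  have hsqrt : Real.sqrt ((l : ℝ) * ((n : ℝ) - l)) ≤ lam := by
    have h := Real.sqrt_le_sqrt hlam2
    rwa [Real.sqrt_sq hlam.le] at h
  have hsqrtpos : 0 < Real.sqrt ((l : ℝ) * ((n : ℝ) - l)) :=
    Real.sqrt_pos.mpr (by nlinarith)
  -- witnesses for sup and inf
  obtain ⟨w, -, hw⟩ := Finset.exists_mem_eq_sup' (Finset.univ_nonempty (α := β))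
    (fun v : β => y (Sum.inr v))
  obtain ⟨u, -, hu⟩ := Finset.exists_mem_eq_inf' (Finset.univ_nonempty (α := β))
    (fun v : β => y (Sum.inr v))
  set M := Finset.univ.sup' Finset.univ_nonempty (fun v : β => y (Sum.inr v)) with hMdef
  set μ := Finset.univ.inf' Finset.univ_nonempty (fun v : β => y (Sum.inr v)) with hμdef
  have hMpos : 0 < M := by rw [hw]; exact hpos _
  have hMle : ∀ b : β, y (Sum.inr b) ≤ M := fun b =>
    Finset.le_sup' (fun v : β => y (Sum.inr v)) (Finset.mem_univ b)
  -- key bound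
  have hNw : (∑ b, (if H₂.Adj w b then y (Sum.inr b) else 0)) ≤ (d : ℝ) * M := by
    calc (∑ b, (if H₂.Adj w b then y (Sum.inr b) else 0))
        ≤ ∑ b, (if H₂.Adj w b then M else 0) := by
          apply Finset.sum_le_sum
          intro b _
          split
          · exact hMle b
          · exact le_rfl
      _ = (Finset.univ.filter (H₂.Adj w)).card * M := by
          rw [← Finset.sum_filter, Finset.sum_const, nsmul_eq_mul]
      _ = (H₂.degree w : ℝ) * M := by
          rw [← SimpleGraph.neighborFinset_eq_filter]
          rfl
      _ ≤ (d : ℝ) * M := by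
          apply mul_le_mul_of_nonneg_right _ hMpos.le
          exact_mod_cast hd w
  have hNu : (0:ℝ) ≤ ∑ b, (if H₂.Adj u b then y (Sum.inr b) else 0) :=
    Finset.sum_nonneg (fun b _ => by split <;> [exact (hpos _).le; exact le_rfl])
  have hkey : lam * (M - μ) ≤ (d : ℝ) * M := by
    have h1 := heqβ w
    have h2 := heqβ u
    rw [← hw] at h1
    rw [← hu] at h2
    have : lam * (M - μ) = (∑ b, (if H₂.Adj w b then y (Sum.inr b) else 0)) -
        (∑ b, (if H₂.Adj u b then y (Sum.inr b) else 0)) := by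
      linarith [h1, h2]
    linarith [this, hNw, hNu]
  have part1 : M - μ ≤ (d : ℝ) * M / lam := by
    rw [le_div_iff₀ hlam]
    linarith [hkey]
  refine ⟨part1, ?_⟩
  have hdiv : (d : ℝ) * M / lam ≤ (d : ℝ) * M / Real.sqrt ((l : ℝ) * ((n : ℝ) - l)) := by
    apply div_le_div_of_nonneg_left (by positivity) hsqrtpos hsqrt
  have : M * (1 - (d : ℝ) / Real.sqrt ((l : ℝ) * ((n : ℝ) - l))) =
      M - (d : ℝ) * M / Real.sqrt ((l : ℝ) * ((n : ℝ) - l)) := by ring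
  rw [this]
  linarith [part1, hdiv]
end
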